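/- (Olson) Let X and Y be finite nonempty subsets of a group G with 1 ∈ X, and let Z = XY. Then either XZ = Z, or |Z| ≥ (1/2)|X| + |Y|. -/
import Mathlib

open Pointwise

namespace OlsonAux

variable {G : Type*} [Group G] [DecidableEq G]

lemma subset_mulL {X : Finset G} (A : Finset G) (h1 : 1 ∈ X) : A ⊆ X * A := by
  intro a ha; exact Finset.mem_mul.2 ⟨1, h1, a, ha, one_mul a⟩

lemma subset_mulR (X : Finset G) {A : Finset G} (h1 : 1 ∈ A) : X ⊆ X * A := by
  intro x hx; exact Finset.mem_mul.2 ⟨x, hx, 1, h1, mul_one x⟩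

lemma submod (X A B : Finset G) :
    (X * (A ∪ B)).card + (X * (A ∩ B)).card ≤ (X * A).card + (X * B).card := by
  rw [Finset.mul_union]
  have h1 : (X * (A ∩ B)).card ≤ (X * A ∩ (X * B)).card :=
    Finset.card_le_card (Finset.mul_inter_subset)
  have h2 := Finset.card_union_add_card_inter (X * A) (X * B)
  omega

lemma inv_mem_of_mul_self {A : Finset G} (h1 : 1 ∈ A) (hAA : A * A = A) {a : G} (ha : a ∈ A) :
    a⁻¹ ∈ A := by
  have hsa : ({a} : Finset G) ⊆ A := Finset.singleton_subset_iff.2 ha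
  have hsub : {a} * A ⊆ A := (Finset.mul_subset_mul_right hsa).trans (le_of_eq hAA)
  have hcard : ({a} * A).card = A.card := Finset.card_singleton_mul a A
  have heq : {a} * A = A :=
    Finset.eq_of_subset_of_card_le hsub (by omega)
  have h1' : (1 : G) ∈ {a} * A := by rw [heq]; exact h1
  obtain ⟨y, hy, z, hz, hyz⟩ := Finset.mem_mul.1 h1'
  have hya : y = a := by simpa using hy
  subst hya
  have : y⁻¹ = z := inv_eq_of_mul_eq_one_right hyz
  rwa [← this] at hz

lemma subgroupAtom {X A : Finset G} (h1X : 1 ∈ X) (h1A : 1 ∈ A) (hAA : A * A = A)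
    (hne : X * A ≠ A) : 2 * A.card ≤ (X * A).card := by
  have hsub : A ⊆ X * A := subset_mulL A h1X
  have hex : ∃ b ∈ X * A, b ∉ A := by
    by_contra h
    push_neg at h
    exact hne (Finset.Subset.antisymm h hsub)
  obtain ⟨b, hb, hbA⟩ := hex
  obtain ⟨x, hx, a, ha, hxa⟩ := Finset.mem_mul.1 hb
  have hdisj : Disjoint ({x} * A) A := by
    rw [Finset.disjoint_left]
    intro y hy hyA
    obtain ⟨x', hx', a', ha', hxa'⟩ := Finset.mem_mul.1 hy
    have hxx : x' = x := Finset.mem_singleton.1 hx'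
    rw [hxx] at hxa'
    -- x = y * a'⁻¹ ∈ A
    have hxmem : x ∈ A := by
      have : x = y * a'⁻¹ := by rw [← hxa']; group
      rw [this, ← hAA]
      exact Finset.mem_mul.2 ⟨y, hyA, a'⁻¹, inv_mem_of_mul_self h1A hAA ha', rfl⟩
    have : b ∈ A := by
      rw [← hxa, ← hAA]
      exact Finset.mem_mul.2 ⟨x, hxmem, a, ha, rfl⟩
    exact hbA this
  have hu : {x} * A ∪ A ⊆ X * A := by
    apply Finset.union_subset _ hsub
    exact Finset.mul_subset_mul_right (by simpa using hx)
  have := Finset.card_le_card hu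
  rw [Finset.card_union_of_disjoint hdisj, Finset.card_singleton_mul] at this
  omega

theorem lemA (X : Finset G) (h1X : 1 ∈ X)
    (hinf : ∀ B : Finset G, B.Nonempty → X * B ≠ B)
    (Y : Finset G) (hY : Y.Nonempty) :
    X.card + 2 * Y.card ≤ 2 * (X * Y).card := by
  set V : Set ℕ := {n | ∃ A : Finset G, A.Nonempty ∧ (X * A).card = A.card + n} with hV
  have hmemV : ∀ A : Finset G, A.Nonempty → ((X * A).card - A.card) ∈ V := by
    intro A hA
    refine ⟨A, hA, ?_⟩
    have := Finset.card_le_card (subset_mulL A h1X)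
    omega
  have hVne : V.Nonempty := ⟨_, hmemV Y hY⟩
  set κ := sInf V with hκ
  have hlb : ∀ A : Finset G, A.Nonempty → A.card + κ ≤ (X * A).card := by
    intro A hA
    have h1 := Nat.sInf_le (hmemV A hA)
    have h2 := Finset.card_le_card (subset_mulL A h1X)
    omega
  suffices hs : X.card ≤ 2 * κ by
    have := hlb Y hY
    omega
  obtain ⟨A₀, hA₀ne, hA₀⟩ := Nat.sInf_mem hVne
  set W : Set ℕ := {m | ∃ A : Finset G, A.Nonempty ∧ (X * A).card = A.card + κ ∧ A.card = m}
    with hW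
  have hWne : W.Nonempty := ⟨A₀.card, A₀, hA₀ne, hA₀, rfl⟩
  set a := sInf W with ha
  obtain ⟨A₁, hA₁ne, hA₁κ, hA₁card⟩ := Nat.sInf_mem hWne
  obtain ⟨g, hg⟩ := hA₁ne
  set A := A₁ * {g⁻¹} with hA
  have hAcard : A.card = a := by rw [hA, Finset.card_mul_singleton, hA₁card]
  have h1A : (1 : G) ∈ A := by
    rw [hA]
    exact Finset.mem_mul.2 ⟨g, hg, g⁻¹, Finset.mem_singleton_self _, by group⟩
  have hAne : A.Nonempty := ⟨1, h1A⟩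
  have hAκ : (X * A).card = A.card + κ := by
    rw [hA, ← mul_assoc, Finset.card_mul_singleton, Finset.card_mul_singleton]; exact hA₁κ
  have hTrans : ∀ b ∈ A, A * {b} = A := by
    intro b hb
    by_contra hne
    set B := A * {b} with hB
    have hBcard : B.card = a := by rw [hB, Finset.card_mul_singleton, hAcard]
    have hBκ : (X * B).card = B.card + κ := by
      rw [hB, ← mul_assoc, Finset.card_mul_singleton, Finset.card_mul_singleton]; exact hAκ
    have hbB : b ∈ B := by
      rw [hB]; exact Finset.mem_mul.2 ⟨1, h1A, b, Finset.mem_singleton_self _, one_mul b⟩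
    have hCne : (A ∩ B).Nonempty := ⟨b, Finset.mem_inter.2 ⟨hb, hbB⟩⟩
    have hCssub : A ∩ B ⊂ A := by
      refine ⟨Finset.inter_subset_left, fun h => ?_⟩
      have hsub : A ⊆ B := fun t ht => (Finset.mem_inter.1 (h ht)).2
      exact hne (Finset.eq_of_subset_of_card_le hsub (by omega)).symm
    have hCcard : (A ∩ B).card < a := by
      have := Finset.card_lt_card hCssub; omega
    have hCstrict : (A ∩ B).card + κ + 1 ≤ (X * (A ∩ B)).card := by
      have h1 := hlb _ hCne
      rcases Nat.lt_or_ge ((A ∩ B).card + κ) (X * (A ∩ B)).card with h | h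
      · omega
      · exfalso
        have heq : (X * (A ∩ B)).card = (A ∩ B).card + κ := le_antisymm h h1
        have : a ≤ (A ∩ B).card := Nat.sInf_le ⟨A ∩ B, hCne, heq, rfl⟩
        omega
    have hDlb := hlb (A ∪ B) ⟨b, Finset.mem_union_left _ hb⟩
    have hsm := submod X A B
    have hcards := Finset.card_union_add_card_inter A B
    omega
  have hAA : A * A = A := by
    apply Finset.Subset.antisymm
    · intro t ht
      obtain ⟨u, hu, v, hv, huv⟩ := Finset.mem_mul.1 ht
      rw [← hTrans v hv]
      exact Finset.mem_mul.2 ⟨u, hu, v, Finset.mem_singleton_self _, huv⟩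
    · exact subset_mulL A h1A
  have hXAne : X * A ≠ A := hinf A hAne
  have h2a := subgroupAtom h1X h1A hAA hXAne
  have := Finset.card_le_card (subset_mulR X h1A)
  omega
lemma mulHmem {H : Finset G} (hHH : H * H = H) {u v : G} (hu : u ∈ H) (hv : v ∈ H) :
    u * v ∈ H := by
  have := Finset.mem_mul.2 ⟨u, hu, v, hv, rfl⟩
  rwa [hHH] at this

lemma invH {X H : Finset G} (h1H : 1 ∈ H) (hHH : H * H = H) (hXH : X ⊆ H) : X⁻¹ ⊆ H := by
  intro t ht
  obtain ⟨x, hx, rfl⟩ := Finset.mem_inv.1 ht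
  exact inv_mem_of_mul_self h1H hHH (hXH hx)

lemma mulsubH {X H : Finset G} (hHH : H * H = H) (hXH : X ⊆ H) {A : Finset G} (hAH : A ⊆ H) :
    X * A ⊆ H :=
  (Finset.mul_subset_mul hXH hAH).trans (le_of_eq hHH)

def VV (X H : Finset G) : Set ℕ :=
  {n | ∃ A : Finset G, A.Nonempty ∧ A ⊆ H ∧ X * A ≠ H ∧ (X * A).card = A.card + n}

noncomputable def kap (X H : Finset G) : ℕ := sInf (VV X H)

def WW (X H : Finset G) : Set ℕ :=
  {m | ∃ A : Finset G, A.Nonempty ∧ A ⊆ H ∧ X * A ≠ H ∧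
    (X * A).card = A.card + kap X H ∧ A.card = m}

noncomputable def atomsize (X H : Finset G) : ℕ := sInf (WW X H)

lemma memVV {X H A : Finset G} (h1X : 1 ∈ X) (hAne : A.Nonempty) (hAH : A ⊆ H)
    (hne : X * A ≠ H) : ((X * A).card - A.card) ∈ VV X H := by
  refine ⟨A, hAne, hAH, hne, ?_⟩
  have := Finset.card_le_card (subset_mulL A h1X)
  omega

lemma klb {X H A : Finset G} (h1X : 1 ∈ X) (hAne : A.Nonempty) (hAH : A ⊆ H)
    (hne : X * A ≠ H) : A.card + kap X H ≤ (X * A).card := by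
  have h1 := Nat.sInf_le (memVV h1X hAne hAH hne)
  have h2 := Finset.card_le_card (subset_mulL A h1X)
  unfold kap
  omega

lemma dual_mem {X H : Finset G} (A : Finset G) (h1H : 1 ∈ H) (hHH : H * H = H) (hXH : X ⊆ H) :
    X⁻¹ * (H \ (X * A)) ⊆ H \ A := by
  intro t ht
  obtain ⟨u, hu, v, hv, huv⟩ := Finset.mem_mul.1 ht
  obtain ⟨x, hx, hux⟩ := Finset.mem_inv.1 hu
  rw [Finset.mem_sdiff] at hv
  rw [Finset.mem_sdiff]
  constructor
  · rw [← huv, ← hux]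
    exact mulHmem hHH (inv_mem_of_mul_self h1H hHH (hXH hx)) hv.1
  · intro htA
    apply hv.2
    have hveq : v = x * t := by rw [← huv, ← hux]; group
    rw [hveq]
    exact Finset.mem_mul.2 ⟨x, hx, t, htA, rfl⟩

lemma dual_frag {X H A : Finset G} (h1X : 1 ∈ X) (h1H : 1 ∈ H) (hHH : H * H = H)
    (hXH : X ⊆ H) (hAne : A.Nonempty) (hAH : A ⊆ H) (hne : X * A ≠ H) :
    (H \ (X * A)).Nonempty ∧ (H \ (X * A)) ⊆ H ∧ X⁻¹ * (H \ (X * A)) ≠ H ∧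
      (X⁻¹ * (H \ (X * A))).card + A.card ≤ H.card := by
  have hXAH : X * A ⊆ H := mulsubH hHH hXH hAH
  refine ⟨?_, Finset.sdiff_subset, ?_, ?_⟩
  · rw [Finset.sdiff_nonempty]
    intro hsub
    exact hne (Finset.Subset.antisymm hXAH hsub)
  · intro heq
    obtain ⟨g, hg⟩ := hAne
    have hgH : g ∈ H := hAH hg
    have : g ∈ X⁻¹ * (H \ (X * A)) := by rw [heq]; exact hgH
    have := dual_mem A h1H hHH hXH this
    rw [Finset.mem_sdiff] at this
    exact this.2 hg
  · have h1 := Finset.card_le_card (dual_mem A h1H hHH hXH (X := X))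
    have h2 := Finset.card_sdiff_add_card_eq_card hAH
    omega

lemma kap_dual_le {X H : Finset G} (h1X : 1 ∈ X) (h1H : 1 ∈ H) (hHH : H * H = H)
    (hXH : X ⊆ H) (hS : (VV X H).Nonempty) :
    (VV X⁻¹ H).Nonempty ∧ kap X⁻¹ H ≤ kap X H := by
  obtain ⟨A, hAne, hAH, hne, hfrag⟩ : ∃ A : Finset G, A.Nonempty ∧ A ⊆ H ∧ X * A ≠ H ∧
      (X * A).card = A.card + kap X H := Nat.sInf_mem hS
  obtain ⟨hne1, hsub1, hne2, hcard1⟩ := dual_frag h1X h1H hHH hXH hAne hAH hne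
  have h1Xi : (1 : G) ∈ X⁻¹ := by
    rw [Finset.mem_inv]; exact ⟨1, h1X, inv_one⟩
  have hmem := memVV (H := H) h1Xi hne1 hsub1 hne2
  refine ⟨⟨_, hmem⟩, ?_⟩
  have hle := Nat.sInf_le hmem
  have h2 := Finset.card_le_card (subset_mulL (H \ (X * A)) h1Xi)
  have h3 := Finset.card_sdiff_add_card_eq_card (mulsubH hHH hXH hAH)
  have h4 := Finset.card_le_card hAH
  unfold kap at *
  omega
lemma kap_dual {X H : Finset G} (h1X : 1 ∈ X) (h1H : 1 ∈ H) (hHH : H * H = H)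
    (hXH : X ⊆ H) (hS : (VV X H).Nonempty) :
    (VV X⁻¹ H).Nonempty ∧ kap X⁻¹ H = kap X H := by
  obtain ⟨hS', hle⟩ := kap_dual_le h1X h1H hHH hXH hS
  have h1Xi : (1 : G) ∈ X⁻¹ := by rw [Finset.mem_inv]; exact ⟨1, h1X, inv_one⟩
  have hXiH : X⁻¹ ⊆ H := invH h1H hHH hXH
  obtain ⟨hS'', hle'⟩ := kap_dual_le h1Xi h1H hHH hXiH hS'
  rw [inv_inv] at hle'
  exact ⟨hS', le_antisymm hle hle'⟩

theorem coreAux {X H : Finset G} (h1X : 1 ∈ X) (hXH : X ⊆ H) (h1H : 1 ∈ H)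
    (hHH : H * H = H)
    (hgen : ∀ A : Finset G, A ⊆ H → 1 ∈ A → X * A = A → A = H)
    (hS : (VV X H).Nonempty)
    (hle : atomsize X H ≤ atomsize X⁻¹ H) :
    X.card ≤ 2 * kap X H := by
  obtain ⟨hS', hkd⟩ := kap_dual h1X h1H hHH hXH hS
  have h1Xi : (1 : G) ∈ X⁻¹ := by rw [Finset.mem_inv]; exact ⟨1, h1X, inv_one⟩
  have hXiH : X⁻¹ ⊆ H := invH h1H hHH hXH
  set κ := kap X H with hκdef
  obtain ⟨A₁, hA₁ne, hA₁H, hA₁neH, hA₁κ⟩ : ∃ A : Finset G, A.Nonempty ∧ A ⊆ H ∧ X * A ≠ H ∧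
      (X * A).card = A.card + κ := Nat.sInf_mem hS
  have hWne : (WW X H).Nonempty := ⟨A₁.card, A₁, hA₁ne, hA₁H, hA₁neH, hA₁κ, rfl⟩
  set a := atomsize X H with hadef
  obtain ⟨A₂, hA₂ne, hA₂H, hA₂neH, hA₂κ, hA₂card⟩ : ∃ A : Finset G, A.Nonempty ∧ A ⊆ H ∧
      X * A ≠ H ∧ (X * A).card = A.card + κ ∧ A.card = a := Nat.sInf_mem hWne
  obtain ⟨g, hg⟩ := hA₂ne
  have hgH : g ∈ H := hA₂H hg
  have hgiH : g⁻¹ ∈ H := inv_mem_of_mul_self h1H hHH hgH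
  set A := A₂ * {g⁻¹} with hA
  have hAH : A ⊆ H := by
    intro t ht
    obtain ⟨u, hu, v, hv, huv⟩ := Finset.mem_mul.1 ht
    rw [Finset.mem_singleton] at hv
    rw [← huv, hv]
    exact mulHmem hHH (hA₂H hu) hgiH
  have h1A : (1 : G) ∈ A := by
    rw [hA]; exact Finset.mem_mul.2 ⟨g, hg, g⁻¹, Finset.mem_singleton_self _, by group⟩
  have hAne : A.Nonempty := ⟨1, h1A⟩
  have hAcard : A.card = a := by rw [hA, Finset.card_mul_singleton, hA₂card]
  have hXA1 : X * A = (X * A₂) * {g⁻¹} := by rw [hA, mul_assoc]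
  have hXAcard : (X * A).card = a + κ := by
    rw [hXA1, Finset.card_mul_singleton, hA₂κ, hA₂card]
  have hXAH : X * A ⊆ H := mulsubH hHH hXH hAH
  have hXA2lt : (X * A₂).card < H.card :=
    Finset.card_lt_card (lt_of_le_of_ne (mulsubH hHH hXH hA₂H) hA₂neH)
  have hAneH : X * A ≠ H := by
    intro heq
    have h5 : (X * A).card = H.card := by rw [heq]
    rw [hXA1, Finset.card_mul_singleton] at h5
    omega
  have hXAlt : (X * A).card < H.card :=
    Finset.card_lt_card (lt_of_le_of_ne hXAH hAneH)
  have hage1 : 1 ≤ a := by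
    have := hAne.card_pos; omega
  have hTrans : ∀ b ∈ A, A * {b} = A := by
    intro b hb
    by_contra hne
    have hbH : b ∈ H := hAH hb
    set B := A * {b} with hB
    have hBH : B ⊆ H := by
      intro t ht
      obtain ⟨u, hu, v, hv, huv⟩ := Finset.mem_mul.1 ht
      rw [Finset.mem_singleton] at hv
      rw [← huv, hv]
      exact mulHmem hHH (hAH hu) hbH
    have hBcard : B.card = a := by rw [hB, Finset.card_mul_singleton, hAcard]
    have hXBcard : (X * B).card = a + κ := by
      rw [hB, ← mul_assoc, Finset.card_mul_singleton, hXAcard]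
    have hbB : b ∈ B := by
      rw [hB]; exact Finset.mem_mul.2 ⟨1, h1A, b, Finset.mem_singleton_self _, one_mul b⟩
    have hCne : (A ∩ B).Nonempty := ⟨b, Finset.mem_inter.2 ⟨hb, hbB⟩⟩
    have hCH : A ∩ B ⊆ H := fun t ht => hAH (Finset.mem_inter.1 ht).1
    have hXCsub : X * (A ∩ B) ⊆ X * A := Finset.mul_subset_mul_left Finset.inter_subset_left
    have hXCne : X * (A ∩ B) ≠ H := by
      intro heq
      have := Finset.card_le_card hXCsub
      rw [heq] at this
      omega
    have hCssub : A ∩ B ⊂ A :=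
      ⟨Finset.inter_subset_left, fun h =>
        hne (Finset.eq_of_subset_of_card_le (fun t ht => (Finset.mem_inter.1 (h ht)).2)
          (by omega)).symm⟩
    have hCcard : (A ∩ B).card < a := by
      have := Finset.card_lt_card hCssub; omega
    have hCge1 : 1 ≤ (A ∩ B).card := hCne.card_pos
    have hCstrict : (A ∩ B).card + κ + 1 ≤ (X * (A ∩ B)).card := by
      have h1 := klb h1X hCne hCH hXCne
      rcases Nat.lt_or_ge ((A ∩ B).card + κ) (X * (A ∩ B)).card with h | h
      · omega
      · exfalso
        have heq : (X * (A ∩ B)).card = (A ∩ B).card + κ := le_antisymm h h1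
        have : a ≤ (A ∩ B).card := Nat.sInf_le ⟨A ∩ B, hCne, hCH, hXCne, heq, rfl⟩
        omega
    by_cases hD : X * (A ∪ B) = H
    · obtain ⟨hAstne, hAstH, hAstneH, hAstcard⟩ :=
        dual_frag h1X h1H hHH hXH hAne hAH hAneH
      have hfragAst : (X⁻¹ * (H \ (X * A))).card = (H \ (X * A)).card + kap X⁻¹ H := by
        have hlow := klb h1Xi hAstne hAstH hAstneH
        have h3 := Finset.card_sdiff_add_card_eq_card hXAH
        omega
      have hatom' : atomsize X⁻¹ H ≤ (H \ (X * A)).card :=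
        Nat.sInf_le ⟨H \ (X * A), hAstne, hAstH, hAstneH, hfragAst, rfl⟩
      have hsm := Finset.card_union_add_card_inter (X * A) (X * B)
      have hXint : (X * (A ∩ B)).card ≤ (X * A ∩ (X * B)).card :=
        Finset.card_le_card Finset.mul_inter_subset
      have hHeq : H.card = (X * A ∪ X * B).card := by rw [← Finset.mul_union, hD]
      have h3 := Finset.card_sdiff_add_card_eq_card hXAH
      omega
    · have hDne : (A ∪ B).Nonempty := ⟨b, Finset.mem_union_left _ hb⟩
      have hDH : A ∪ B ⊆ H := Finset.union_subset hAH hBH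
      have hDlb := klb h1X hDne hDH hD
      have hsm := submod X A B
      have hcards := Finset.card_union_add_card_inter A B
      omega
  have hAA : A * A = A := by
    apply Finset.Subset.antisymm
    · intro t ht
      obtain ⟨u, hu, v, hv, huv⟩ := Finset.mem_mul.1 ht
      rw [← hTrans v hv]
      exact Finset.mem_mul.2 ⟨u, hu, v, Finset.mem_singleton_self _, huv⟩
    · exact subset_mulL A h1A
  by_cases hXA : X * A = A
  · have hAeq : A = H := hgen A hAH h1A hXA
    exact absurd (hXA.trans hAeq) hAneH
  · have h2a := subgroupAtom h1X h1A hAA hXA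
    have := Finset.card_le_card (subset_mulR X h1A)
    omega
lemma singleton_right_cancel {S T : Finset G} {c : G} (h : S * {c} = T * {c}) : S = T := by
  have e : ∀ S : Finset G, (S * {c}) * {c⁻¹} = S := by
    intro S
    rw [mul_assoc, Finset.singleton_mul_singleton, mul_inv_cancel, Finset.singleton_one, mul_one]
  calc S = (S * {c}) * {c⁻¹} := (e S).symm
    _ = (T * {c}) * {c⁻¹} := by rw [h]
    _ = T := e T

theorem core {X H : Finset G} (h1X : 1 ∈ X) (hXH : X ⊆ H) (h1H : 1 ∈ H) (hHH : H * H = H)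
    (hgen : ∀ A : Finset G, A ⊆ H → 1 ∈ A → X * A = A → A = H)
    (hgen' : ∀ A : Finset G, A ⊆ H → 1 ∈ A → X⁻¹ * A = A → A = H)
    (hS : (VV X H).Nonempty) :
    X.card ≤ 2 * kap X H := by
  have h1Xi : (1 : G) ∈ X⁻¹ := by rw [Finset.mem_inv]; exact ⟨1, h1X, inv_one⟩
  have hXiH : X⁻¹ ⊆ H := invH h1H hHH hXH
  obtain ⟨hS', hkd⟩ := kap_dual h1X h1H hHH hXH hS
  rcases Nat.le_or_le (atomsize X H) (atomsize X⁻¹ H) with h | h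
  · exact coreAux h1X hXH h1H hHH hgen hS h
  · have := coreAux h1Xi hXiH h1H hHH hgen' hS' (by rwa [inv_inv])
    rw [Finset.card_inv, hkd] at this
    exact this

theorem coreFin {X H Y : Finset G} (h1X : 1 ∈ X) (hXH : X ⊆ H) (h1H : 1 ∈ H) (hHH : H * H = H)
    (hgen : ∀ A : Finset G, A ⊆ H → 1 ∈ A → X * A = A → A = H)
    (hgen' : ∀ A : Finset G, A ⊆ H → 1 ∈ A → X⁻¹ * A = A → A = H)
    (hYne : Y.Nonempty) (hYH : Y ⊆ H) (hne : X * Y ≠ H) :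
    X.card + 2 * Y.card ≤ 2 * (X * Y).card := by
  have hS : (VV X H).Nonempty := ⟨_, memVV h1X hYne hYH hne⟩
  have h1 := core h1X hXH h1H hHH hgen hgen' hS
  have h2 := klb h1X hYne hYH hne
  omega

lemma pow_mono (X : Finset G) (h1X : 1 ∈ X) (n : ℕ) : X ^ n ⊆ X ^ (n + 1) := by
  rw [pow_succ]
  intro t ht
  exact Finset.mem_mul.2 ⟨t, ht, 1, h1X, mul_one t⟩

lemma one_mem_pow' (X : Finset G) (h1X : 1 ∈ X) (n : ℕ) : (1 : G) ∈ X ^ n := by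
  induction n with
  | zero => rw [pow_zero]; exact Finset.one_mem_one
  | succ n ih => rw [pow_succ]; exact Finset.mem_mul.2 ⟨1, ih, 1, h1X, one_mul 1⟩

lemma pow_stab (X B : Finset G) (h1X : 1 ∈ X) (hB : B.Nonempty) (hXB : X * B = B) :
    ∃ n : ℕ, X * X ^ n = X ^ n := by
  obtain ⟨b, hb⟩ := hB
  have hsub : ∀ n : ℕ, X ^ n ⊆ B * {b⁻¹} := by
    intro n
    induction n with
    | zero =>
      rw [pow_zero]
      intro t ht
      rw [Finset.mem_one] at ht
      subst ht
      exact Finset.mem_mul.2 ⟨b, hb, b⁻¹, Finset.mem_singleton_self _, by group⟩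
    | succ n ih =>
      rw [pow_succ']
      calc X * X ^ n ⊆ X * (B * {b⁻¹}) := Finset.mul_subset_mul_left ih
        _ = (X * B) * {b⁻¹} := by rw [mul_assoc]
        _ = B * {b⁻¹} := by rw [hXB]
  by_contra hcon
  push_neg at hcon
  have hstrict : ∀ n : ℕ, (X ^ n).card < (X ^ (n + 1)).card := by
    intro n
    apply Finset.card_lt_card
    refine lt_of_le_of_ne (pow_mono X h1X n) ?_
    intro heq
    exact hcon n ((pow_succ' X n).symm.trans heq.symm)
  have hgrow : ∀ n : ℕ, n ≤ (X ^ n).card := by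
    intro n
    induction n with
    | zero => omega
    | succ n ih => have := hstrict n; omega
  have hbound := Finset.card_le_card (hsub ((B * {b⁻¹}).card + 1))
  have := hgrow ((B * {b⁻¹}).card + 1)
  omega

lemma build_H (X : Finset G) (h1X : 1 ∈ X) {n : ℕ} (hn : X * X ^ n = X ^ n) :
    ∃ H : Finset G, 1 ∈ H ∧ H * H = H ∧ X ⊆ H ∧
      (∀ A : Finset G, A ⊆ H → 1 ∈ A → X * A = A → A = H) ∧
      (∀ A : Finset G, A ⊆ H → 1 ∈ A → X⁻¹ * A = A → A = H) := by
  have h1H : (1 : G) ∈ X ^ n := one_mem_pow' X h1X n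
  have powmul : ∀ m : ℕ, X ^ m * X ^ n = X ^ n := by
    intro m
    induction m with
    | zero => rw [pow_zero, one_mul]
    | succ m ih => rw [pow_succ', mul_assoc, ih, hn]
  have hHH : X ^ n * X ^ n = X ^ n := powmul n
  have hXsub : X ⊆ X ^ n := (subset_mulR X h1H).trans (le_of_eq hn)
  refine ⟨X ^ n, h1H, hHH, hXsub, ?_, ?_⟩
  · intro A hAH h1A hXA
    have hmul : ∀ m : ℕ, X ^ m * A = A := by
      intro m
      induction m with
      | zero => rw [pow_zero, one_mul]
      | succ m ih => rw [pow_succ', mul_assoc, ih, hXA]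
    have hsub2 : X ^ n ⊆ A := (subset_mulR (X ^ n) h1A).trans (le_of_eq (hmul n))
    exact Finset.Subset.antisymm hAH hsub2
  · intro A hAH h1A hXA
    have hmul : ∀ m : ℕ, (X⁻¹) ^ m * A = A := by
      intro m
      induction m with
      | zero => rw [pow_zero, one_mul]
      | succ m ih => rw [pow_succ', mul_assoc, ih, hXA]
    have hinvsub : (X ^ n)⁻¹ ⊆ A := by
      have := (subset_mulR ((X⁻¹) ^ n) h1A).trans (le_of_eq (hmul n))
      rwa [inv_pow] at this
    have hinveq : (X ^ n)⁻¹ = X ^ n := by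
      apply Finset.eq_of_subset_of_card_le (invH h1H hHH (Finset.Subset.refl _))
      rw [Finset.card_inv]
    rw [hinveq] at hinvsub
    exact Finset.Subset.antisymm hAH hinvsub

set_option maxHeartbeats 1000000 in
lemma finBranch {X Y B : Finset G} (h1 : 1 ∈ X) (hY : Y.Nonempty)
    (hstab : X * (X * Y) ≠ X * Y) (hBne : B.Nonempty) (hXB : X * B = B) :
    X.card + 2 * Y.card ≤ 2 * (X * Y).card := by
  obtain ⟨n, hn⟩ := pow_stab X B h1 hBne hXB
  obtain ⟨H, h1H, hHH, hXH, hgen, hgen'⟩ := build_H X h1 hn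
  have hsub : X * Y ⊆ X * (X * Y) := subset_mulL _ h1
  have hex : ∃ w ∈ X * (X * Y), w ∉ X * Y := by
    by_contra hcon; push_neg at hcon
    exact hstab (Finset.Subset.antisymm hcon hsub)
  obtain ⟨w, hw, hwZ⟩ := hex
  obtain ⟨x, hx, z, hz, hxz⟩ := Finset.mem_mul.1 hw
  obtain ⟨x₀, hx₀, y₀, hy₀, hx₀y₀⟩ := Finset.mem_mul.1 hz
  obtain ⟨Y₁, hY₁⟩ : ∃ Y₁ : Finset G, Y₁ = Y ∩ (H * {y₀}) := ⟨_, rfl⟩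
  obtain ⟨Y₂, hY₂⟩ : ∃ Y₂ : Finset G, Y₂ = Y \ Y₁ := ⟨_, rfl⟩
  have hy₀Y₁ : y₀ ∈ Y₁ := by
    rw [hY₁]
    exact Finset.mem_inter.2 ⟨hy₀,
      Finset.mem_mul.2 ⟨1, h1H, y₀, Finset.mem_singleton_self _, one_mul y₀⟩⟩
  have hY₁H : Y₁ ⊆ H * {y₀} := by rw [hY₁]; exact Finset.inter_subset_right
  have hY₁Y : Y₁ ⊆ Y := by rw [hY₁]; exact Finset.inter_subset_left
  have hXY₁H : X * Y₁ ⊆ H * {y₀} := by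
    calc X * Y₁ ⊆ H * (H * {y₀}) := Finset.mul_subset_mul hXH hY₁H
      _ = (H * H) * {y₀} := by rw [mul_assoc]
      _ = H * {y₀} := by rw [hHH]
  have hdisj : Disjoint (X * Y₁) (X * Y₂) := by
    rw [Finset.disjoint_left]
    intro t ht ht₂
    obtain ⟨x', hx', y', hy', hxy'⟩ := Finset.mem_mul.1 ht₂
    rw [hY₂] at hy'
    have hyY : y' ∈ Y := (Finset.mem_sdiff.1 hy').1
    have hynY₁ : y' ∉ Y₁ := (Finset.mem_sdiff.1 hy').2
    apply hynY₁
    rw [hY₁]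
    refine Finset.mem_inter.2 ⟨hyY, ?_⟩
    obtain ⟨h', hh', u, hu, hhu⟩ := Finset.mem_mul.1 (hXY₁H ht)
    rw [Finset.mem_singleton] at hu
    have e1 : h' * y₀ = t := by rw [← hu]; exact hhu
    have hxiH : x'⁻¹ ∈ H := inv_mem_of_mul_self h1H hHH (hXH hx')
    have e3 : (x'⁻¹ * h') * y₀ = y' := by
      rw [mul_assoc, e1, ← hxy']; group
    exact Finset.mem_mul.2 ⟨x'⁻¹ * h', mulHmem hHH hxiH hh', y₀,
      Finset.mem_singleton_self _, e3⟩
  have hYsplit : Y₁ ∪ Y₂ = Y := by rw [hY₂]; exact Finset.union_sdiff_of_subset hY₁Y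
  have hcardZ : (X * Y).card = (X * Y₁).card + (X * Y₂).card := by
    rw [← hYsplit, Finset.mul_union, Finset.card_union_of_disjoint hdisj]
  have hcardY : Y.card = Y₁.card + Y₂.card := by
    rw [← hYsplit, Finset.card_union_of_disjoint (by rw [hY₂]; exact Finset.disjoint_sdiff)]
  have hY₂le : Y₂.card ≤ (X * Y₂).card := Finset.card_le_card (subset_mulL Y₂ h1)
  have hY₁'ne : (Y₁ * {y₀⁻¹}).Nonempty :=
    ⟨y₀ * y₀⁻¹, Finset.mem_mul.2 ⟨y₀, hy₀Y₁, y₀⁻¹, Finset.mem_singleton_self _, rfl⟩⟩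
  have hY₁'H : Y₁ * {y₀⁻¹} ⊆ H := by
    intro t ht
    obtain ⟨u, hu, v, hv, huv⟩ := Finset.mem_mul.1 ht
    rw [Finset.mem_singleton] at hv
    obtain ⟨h', hh', s, hs, hhs⟩ := Finset.mem_mul.1 (hY₁H hu)
    rw [Finset.mem_singleton] at hs
    have : t = h' := by rw [← huv, hv, ← hhs, hs]; group
    rw [this]; exact hh'
  have hXH1 : X * H = H :=
    Finset.Subset.antisymm (mulsubH hHH hXH (Finset.Subset.refl H)) (subset_mulL H h1)
  have hneH : X * (Y₁ * {y₀⁻¹}) ≠ H := by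
    intro heq
    have e1 : (X * (X * Y₁)) * {y₀⁻¹} = H := by
      rw [mul_assoc, mul_assoc, heq, hXH1]
    have e2 : (X * Y₁) * {y₀⁻¹} = H := by rw [mul_assoc]; exact heq
    have h2 : X * (X * Y₁) = X * Y₁ := singleton_right_cancel (e1.trans e2.symm)
    have hzY₁ : z ∈ X * Y₁ := Finset.mem_mul.2 ⟨x₀, hx₀, y₀, hy₀Y₁, hx₀y₀⟩
    have hwmem : w ∈ X * (X * Y₁) := Finset.mem_mul.2 ⟨x, hx, z, hzY₁, hxz⟩
    rw [h2] at hwmem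
    exact hwZ (Finset.mul_subset_mul_left hY₁Y hwmem)
  have hcards := coreFin h1 hXH h1H hHH hgen hgen' hY₁'ne hY₁'H hneH
  rw [← mul_assoc, Finset.card_mul_singleton, Finset.card_mul_singleton] at hcards
  omega

end OlsonAux

open OlsonAux Finset in
/-- Olson's theorem. -/
theorem stmt10 {G : Type*} [Group G] [DecidableEq G]
    (X Y : Finset G) (hX : X.Nonempty) (hY : Y.Nonempty) (h1 : (1 : G) ∈ X) :
    X * (X * Y) = X * Y ∨
      (X.card : ℝ) / 2 + (Y.card : ℝ) ≤ ((X * Y).card : ℝ) := by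
  by_cases hstab : X * (X * Y) = X * Y
  · exact Or.inl hstab
  right
  have key : X.card + 2 * Y.card ≤ 2 * (X * Y).card := by
    by_cases hfin : ∃ B : Finset G, B.Nonempty ∧ X * B = B
    · obtain ⟨B, hBne, hXB⟩ := hfin
      exact finBranch h1 hY hstab hBne hXB
    · push_neg at hfin
      exact lemA X h1 hfin Y hY
  have h0 : ((X.card : ℕ) : ℝ) + 2 * ((Y.card : ℕ) : ℝ) ≤ 2 * (((X * Y).card : ℕ) : ℝ) := by
    exact_mod_cast key
  linarith
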